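/- Let n, r ≥ 1 be integers, q an odd prime power, and T ∈ M_n(𝔽_q). Then the cardinality of the matrix sphere σ_T satisfies the exact identity (as complex numbers) #σ_T = q^{n²(r−1)} + q^{−n²} · Σ_{S ∈ M_n(𝔽_q), S ≠ 0} ψ(−ST) · G(S,0)^r. -/
import Mathlib


open scoped BigOperators

/-- The additive character `ψ(X) = exp((2πi/p)·Tr_{F/F_p}(Tr X))` on `n × n` matrices
over a finite field `F` of characteristic `p`. -/
noncomputable def psi (F : Type) [Field F] [Fintype F] {n : ℕ}
    (X : Matrix (Fin n) (Fin n) F) : ℂ :=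
  letI : Algebra (ZMod (ringChar F)) F := ZMod.algebra _ _
  Complex.exp (2 * Real.pi * Complex.I *
    (((Algebra.trace (ZMod (ringChar F)) F X.trace).val : ℂ) / (ringChar F : ℂ)))

/-- The radical `{X : Tr(A(XY+YX)) = 0 for all Y}` of the quadratic form
`X ↦ Tr(AX²)` on `M_n(F)`. -/
def radical (F : Type) [Field F] [Fintype F] {n : ℕ}
    (A : Matrix (Fin n) (Fin n) F) : Submodule F (Matrix (Fin n) (Fin n) F) where
  carrier := {X : Matrix (Fin n) (Fin n) F |
    ∀ Y : Matrix (Fin n) (Fin n) F, (A * (X * Y + Y * X)).trace = 0}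
  zero_mem' := by intro Y; simp
  add_mem' := by
    intro X₁ X₂ h₁ h₂ Y
    have e : A * ((X₁ + X₂) * Y + Y * (X₁ + X₂))
        = A * (X₁ * Y + Y * X₁) + A * (X₂ * Y + Y * X₂) := by noncomm_ring
    show (A * ((X₁ + X₂) * Y + Y * (X₁ + X₂))).trace = 0
    rw [e, Matrix.trace_add, h₁ Y, h₂ Y, add_zero]
  smul_mem' := by
    intro c X h Y
    have e : A * ((c • X) * Y + Y * (c • X)) = c • (A * (X * Y + Y * X)) := by
      rw [smul_mul_assoc, Matrix.mul_smul, ← smul_add, Matrix.mul_smul]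
    show (A * ((c • X) * Y + Y * (c • X))).trace = 0
    rw [e, Matrix.trace_smul, h Y, smul_zero]

/-- The radical invariant `ρ_A`: the `F`-dimension of the radical of `X ↦ Tr(AX²)`. -/
noncomputable def rho (F : Type) [Field F] [Fintype F] {n : ℕ}
    (A : Matrix (Fin n) (Fin n) F) : ℕ :=
  Module.finrank F (radical F A)

/-- The quadratic matrix Gauss sum `G(A,B) = Σ_X ψ(AX² + BX)`. -/
noncomputable def matGaussSum (F : Type) [Field F] [Fintype F] {n : ℕ}
    (A B : Matrix (Fin n) (Fin n) F) : ℂ :=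
  ∑ X : Matrix (Fin n) (Fin n) F, psi F (A * X ^ 2 + B * X)

/-- The matrix sphere `σ_T = {X ∈ M_n(F)^r : X₁² + ⋯ + X_r² = T}`. -/
def matSphere (F : Type) [Field F] [Fintype F] [DecidableEq F] {n : ℕ} (r : ℕ)
    (T : Matrix (Fin n) (Fin n) F) : Finset (Fin r → Matrix (Fin n) (Fin n) F) :=
  Finset.univ.filter (fun X => ∑ i, (X i) ^ 2 = T)

/-- The Fourier transform `f̂(M) = q^{-rn²} Σ_A f(A) conj(ψ(M·A))` on `M_n(F)^r`. -/
noncomputable def matFourier (F : Type) [Field F] [Fintype F] {n r : ℕ}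
    (f : (Fin r → Matrix (Fin n) (Fin n) F) → ℂ)
    (M : Fin r → Matrix (Fin n) (Fin n) F) : ℂ :=
  ((Fintype.card F : ℂ) ^ (r * n ^ 2))⁻¹ *
    ∑ A : Fin r → Matrix (Fin n) (Fin n) F, f A * (starRingEnd ℂ) (psi F (∑ i, M i * A i))

lemma aux_neZero (F : Type) [Field F] [Fintype F] : NeZero (ringChar F) :=
  ⟨(CharP.char_is_prime F (ringChar F)).ne_zero⟩

attribute [local instance] aux_neZero

noncomputable def phiM (F : Type) [Field F] [Fintype F] {n : ℕ}
    (X : Matrix (Fin n) (Fin n) F) : ZMod (ringChar F) :=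
  letI : Algebra (ZMod (ringChar F)) F := ZMod.algebra _ _
  Algebra.trace (ZMod (ringChar F)) F X.trace

lemma psi_eq_char (F : Type) [Field F] [Fintype F] {n : ℕ} (X : Matrix (Fin n) (Fin n) F) :
    psi F X = ZMod.stdAddChar (phiM F X) := by
  rw [ZMod.stdAddChar_apply, ZMod.toCircle_apply]
  simp only [psi, phiM]
  push_cast
  ring_nf

section AuxSec

variable (F : Type) [Field F] [Fintype F] {n : ℕ}

lemma phiM_add (X Y : Matrix (Fin n) (Fin n) F) :
    phiM F (X + Y) = phiM F X + phiM F Y := by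
  simp only [phiM, Matrix.trace_add, map_add]

lemma phiM_zero : phiM F (0 : Matrix (Fin n) (Fin n) F) = 0 := by
  simp only [phiM, Matrix.trace_zero, map_zero]

lemma psi_zero : psi F (0 : Matrix (Fin n) (Fin n) F) = 1 := by
  rw [psi_eq_char, phiM_zero, AddChar.map_zero_eq_one]

lemma psi_add (X Y : Matrix (Fin n) (Fin n) F) :
    psi F (X + Y) = psi F X * psi F Y := by
  rw [psi_eq_char, psi_eq_char, psi_eq_char, phiM_add, AddChar.map_add_eq_mul]

lemma psi_sum {ι : Type*} (s : Finset ι) (f : ι → Matrix (Fin n) (Fin n) F) :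
    psi F (∑ i ∈ s, f i) = ∏ i ∈ s, psi F (f i) := by
  classical
  induction s using Finset.cons_induction with
  | empty => simpa using psi_zero F
  | cons a s ha ih => rw [Finset.sum_cons, Finset.prod_cons, psi_add, ih]

/-- `S ↦ ψ(S A)` as an additive character. -/
noncomputable def psiMul (A : Matrix (Fin n) (Fin n) F) :
    AddChar (Matrix (Fin n) (Fin n) F) ℂ where
  toFun S := psi F (S * A)
  map_zero_eq_one' := by show psi F (0 * A) = 1; rw [Matrix.zero_mul]; exact psi_zero F
  map_add_eq_mul' := fun a b => by
    show psi F ((a + b) * A) = psi F (a * A) * psi F (b * A)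
    rw [Matrix.add_mul]; exact psi_add F _ _

lemma trace_stdBasis_mul [DecidableEq F] (i j : Fin n) (b : F) (A : Matrix (Fin n) (Fin n) F) :
    (Matrix.single j i b * A).trace = A i j * b := by
  simp [Matrix.trace, Matrix.diag, Matrix.mul_apply, Matrix.single, ite_and,
    Finset.sum_ite_eq, mul_comm]

lemma sum_psi_mul_eq_zero [DecidableEq F] {A : Matrix (Fin n) (Fin n) F} (hA : A ≠ 0) :
    ∑ S : Matrix (Fin n) (Fin n) F, psi F (S * A) = 0 := by
  have h : psiMul F A ≠ 0 := by
    rw [AddChar.ne_zero_iff]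
    obtain ⟨i, j, hij⟩ : ∃ i j, A i j ≠ 0 := by
      by_contra h; push_neg at h; exact hA (by ext i j; exact h i j)
    letI : Algebra (ZMod (ringChar F)) F := ZMod.algebra _ _
    obtain ⟨b, hb⟩ := FiniteField.trace_to_zmod_nondegenerate F hij
    refine ⟨Matrix.single j i b, ?_⟩
    have hphi : phiM F (Matrix.single j i b * A)
        = Algebra.trace (ZMod (ringChar F)) F (A i j * b) := by
      simp only [phiM]; rw [trace_stdBasis_mul]
    show psi F (Matrix.single j i b * A) ≠ 1
    rw [psi_eq_char, hphi]
    intro h1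
    apply hb
    have := ZMod.injective_stdAddChar (N := ringChar F)
      (by rw [h1, AddChar.map_zero_eq_one] :
        ZMod.stdAddChar (Algebra.trace (ZMod (ringChar F)) F (A i j * b))
          = ZMod.stdAddChar 0)
    exact this
  have := AddChar.sum_eq_zero_iff_ne_zero.mpr h
  simpa [psiMul, AddChar.coe_mk] using this

lemma card_matrix : Fintype.card (Matrix (Fin n) (Fin n) F) = Fintype.card F ^ (n ^ 2) := by
  classical
  rw [show Fintype.card (Matrix (Fin n) (Fin n) F)
      = Fintype.card (Fin n → Fin n → F) from Fintype.card_congr Matrix.of.symm]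
  simp [pow_mul, sq]

lemma sum_psi_mul_zero : ∑ S : Matrix (Fin n) (Fin n) F, psi F (S * (0 : Matrix (Fin n) (Fin n) F))
    = (Fintype.card F : ℂ) ^ (n ^ 2) := by
  simp only [Matrix.mul_zero, psi_zero, Finset.sum_const, Finset.card_univ, nsmul_eq_mul, mul_one]
  rw [card_matrix]
  push_cast
  ring


lemma matGaussSum_zero_zero : matGaussSum F (0 : Matrix (Fin n) (Fin n) F) 0
    = (Fintype.card F : ℂ) ^ (n ^ 2) := by
  classical
  have : ∀ X : Matrix (Fin n) (Fin n) F, psi F ((0:Matrix (Fin n) (Fin n) F) * X ^ 2 + 0 * X) = 1 := by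
    intro X; rw [Matrix.zero_mul, Matrix.zero_mul, add_zero]; exact psi_zero F
  simp only [matGaussSum, this, Finset.sum_const, Finset.card_univ, nsmul_eq_mul, mul_one,
    card_matrix]
  push_cast; ring


end AuxSec

/-- Lemma 3.5, equation (3.4): the exact counting identity
`#σ_T = q^{n²(r-1)} + q^{-n²} Σ_{S ≠ 0} ψ(-ST) G(S,0)^r`. -/
theorem matSphere_card_identity (n r : ℕ) (hn : 1 ≤ n) (hr : 1 ≤ r)
    (F : Type) [Field F] [Fintype F] [DecidableEq F]
    (hq : Odd (Fintype.card F)) (T : Matrix (Fin n) (Fin n) F) :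
    ((matSphere F r T).card : ℂ) =
      (Fintype.card F : ℂ) ^ (n ^ 2 * (r - 1)) +
        ((Fintype.card F : ℂ) ^ (n ^ 2))⁻¹ *
          ∑ S ∈ Finset.univ.filter (fun S : Matrix (Fin n) (Fin n) F => S ≠ 0),
            psi F (-(S * T)) * (matGaussSum F S 0) ^ r := by
  classical
  have hq0 : (Fintype.card F : ℂ) ≠ 0 := Nat.cast_ne_zero.mpr Fintype.card_ne_zero
  have hN : ((Fintype.card F : ℂ) ^ (n ^ 2)) ≠ 0 := pow_ne_zero _ hq0
  have key : ∀ A : Matrix (Fin n) (Fin n) F,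
      (if A = T then (1:ℂ) else 0)
        = ((Fintype.card F : ℂ) ^ (n ^ 2))⁻¹ * ∑ S : Matrix (Fin n) (Fin n) F, psi F (S * (A - T)) := by
    intro A
    by_cases h : A = T
    · rw [if_pos h, h, sub_self, sum_psi_mul_zero, inv_mul_cancel₀ hN]
    · rw [if_neg h, sum_psi_mul_eq_zero F (sub_ne_zero.mpr h), mul_zero]
  have step1 : ((matSphere F r T).card : ℂ)
      = ∑ X : Fin r → Matrix (Fin n) (Fin n) F, if (∑ i, (X i)^2) = T then (1:ℂ) else 0 := by
    simp only [matSphere]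
    rw [Finset.card_filter]
    push_cast
    exact Finset.sum_congr rfl fun X _ => by split <;> simp
  have inner : ∀ S : Matrix (Fin n) (Fin n) F,
      (∑ X : Fin r → Matrix (Fin n) (Fin n) F, psi F (S * ((∑ i, (X i)^2) - T)))
        = psi F (-(S * T)) * (matGaussSum F S 0) ^ r := by
    intro S
    have hg : matGaussSum F S 0 = ∑ Y : Matrix (Fin n) (Fin n) F, psi F (S * Y ^ 2) := by
      simp [matGaussSum]
    calc ∑ X : Fin r → Matrix (Fin n) (Fin n) F, psi F (S * ((∑ i, (X i)^2) - T))
        = ∑ X : Fin r → Matrix (Fin n) (Fin n) F, psi F (-(S*T)) * psi F (S * ∑ i, (X i)^2) := by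
          refine Finset.sum_congr rfl fun X _ => ?_
          rw [Matrix.mul_sub, sub_eq_add_neg, psi_add, mul_comm]
      _ = psi F (-(S*T)) * ∑ X : Fin r → Matrix (Fin n) (Fin n) F, psi F (S * ∑ i, (X i)^2) := by
          rw [Finset.mul_sum]
      _ = psi F (-(S*T)) * (matGaussSum F S 0)^r := by
          congr 1
          rw [hg, Fintype.sum_pow]
          refine Finset.sum_congr rfl fun X _ => ?_
          rw [Finset.mul_sum, psi_sum]
  have split : (∑ S : Matrix (Fin n) (Fin n) F, psi F (-(S*T)) * (matGaussSum F S 0)^r)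
      = (Fintype.card F : ℂ)^(n^2 * r)
        + ∑ S ∈ Finset.univ.filter (fun S : Matrix (Fin n) (Fin n) F => S ≠ 0),
            psi F (-(S*T)) * (matGaussSum F S 0)^r := by
    rw [← Finset.sum_filter_add_sum_filter_not Finset.univ (fun S : Matrix (Fin n) (Fin n) F => S = 0)]
    congr 1
    · rw [Finset.filter_eq', if_pos (Finset.mem_univ _), Finset.sum_singleton]
      rw [Matrix.zero_mul, neg_zero, psi_zero, matGaussSum_zero_zero, one_mul, ← pow_mul]
  obtain ⟨r', rfl⟩ : ∃ r', r = r' + 1 := ⟨r - 1, (Nat.succ_pred_eq_of_pos hr).symm⟩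
  rw [step1]
  simp_rw [key]
  rw [← Finset.mul_sum, Finset.sum_comm]
  simp_rw [inner]
  rw [split, mul_add]
  congr 1
  · rw [Nat.add_sub_cancel, mul_add, mul_one, pow_add,
      mul_comm ((Fintype.card F : ℂ) ^ (n ^ 2 * r')), inv_mul_cancel_left₀ hN]
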